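/- Let G be a simple connected non-bipartite r-regular graph with n vertices, m edges, Laplacian eigenvalue λ with eigenvector x, and incidence matrix B. Let μ = (qr + λ - 2)² + 4q(2r - λ) and suppose λ ≠ 2r, and set y = (qr + λ - 2 ∓ √μ)/(2q(2r - λ)). Then f(λ) = (1/2)(qr + λ + 2 ± √μ) is an eigenvalue of the Laplacian of the q-triangulation R_q(G), with eigenvector (x; yBᵀx; ...; yBᵀx) (q copies of yBᵀx). -/

import Mathlib

/-- Non-bipartite branch of the `q`-triangulation eigenvalue theorem. Let `G` be a simple
connected non-bipartite `r`-regular graph with Laplacian eigenpair `(λ, x)`, `λ ≠ 2r`,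
incidence matrix `B`, and let `M` be the Laplacian of `R_q(G)` in block form (top-left
`qrI + L`, off-diagonal blocks `-B`, `-Bᵀ`, diagonal blocks `2I`). Then
`f(λ) = (1/2)(qr + λ + 2 ± √μ)`, with `μ = (qr + λ - 2)² + 4q(2r - λ)`, is an eigenvalue of
`M` with eigenvector `(x; yBᵀx; …; yBᵀx)`, where `y = (qr + λ - 2 ∓ √μ)/(2q(2r - λ))`. -/
theorem q_triangulation_nonbipartite_eigenvalues {V : Type*} [Fintype V] [DecidableEq V]
    (G : SimpleGraph V) [DecidableRel G.Adj] [Fintype G.edgeSet]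
    (hconn : G.Connected)
    (hnonbip : ¬ ∃ s : Set V, ∀ a b, G.Adj a b → (a ∈ s ↔ b ∉ s))
    (r : ℕ) (hreg : G.IsRegularOfDegree r)
    (B : Matrix V G.edgeSet ℝ)
    (hB : ∀ (v : V) (e : G.edgeSet), B v e = if v ∈ (e : Sym2 V) then 1 else 0)
    (L : Matrix V V ℝ) (hL : L = (r : ℝ) • (1 : Matrix V V ℝ) - G.adjMatrix ℝ)
    (lam : ℝ) (x : V → ℝ) (hx : x ≠ 0) (heig : L.mulVec x = lam • x)
    (hlam : lam ≠ 2 * r)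
    (q : ℕ) (hq : 1 ≤ q)
    (M : Matrix (V ⊕ (Fin q × G.edgeSet)) (V ⊕ (Fin q × G.edgeSet)) ℝ)
    (hM : M = Matrix.fromBlocks
      (((q * r : ℕ) : ℝ) • (1 : Matrix V V ℝ) + L)
      (Matrix.of fun v p => -B v p.2)
      (Matrix.of fun p v => -B v p.2)
      ((2 : ℝ) • (1 : Matrix (Fin q × G.edgeSet) (Fin q × G.edgeSet) ℝ)))
    (ε : ℝ) (hε : ε = 1 ∨ ε = -1)
    (μ y f : ℝ)
    (hμ : μ = (q * r + lam - 2) ^ 2 + 4 * q * (2 * r - lam))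
    (hy : y = (q * r + lam - 2 - ε * Real.sqrt μ) / (2 * q * (2 * r - lam)))
    (hf : f = (1 / 2) * (q * r + lam + 2 + ε * Real.sqrt μ)) :
    M.mulVec (Sum.elim x (fun p => y * B.transpose.mulVec x p.2))
      = f • Sum.elim x (fun p => y * B.transpose.mulVec x p.2) := by
  classical
  set w : G.edgeSet → ℝ := B.transpose.mulVec x with hwdef
  -- B agrees with the incidence matrix
  have hBinc : ∀ (v : V) (e : G.edgeSet), B v e = G.incMatrix ℝ v ↑e := by
    intro v e
    rw [hB, G.incMatrix_apply']
    congr 1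
    simp only [SimpleGraph.incidenceSet, Set.mem_setOf_eq, e.2, true_and, eq_iff_iff]
  -- B * Bᵀ = 2r • 1 - L
  have hBBT : B * B.transpose = (2 * (r : ℝ)) • 1 - L := by
    have h1 := G.incMatrix_mul_transpose (R := ℝ)
    ext u v
    have e1 : (B * B.transpose) u v
        = ∑ e : G.edgeSet, G.incMatrix ℝ u ↑e * G.incMatrix ℝ v ↑e := by
      simp [Matrix.mul_apply, hBinc]
    have e2 : ∑ e : G.edgeSet, G.incMatrix ℝ u ↑e * G.incMatrix ℝ v ↑e
        = ∑ e : Sym2 V, G.incMatrix ℝ u e * G.incMatrix ℝ v e := by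
      rw [← Finset.sum_subtype G.edgeFinset (fun e => SimpleGraph.mem_edgeFinset)
        (fun e => G.incMatrix ℝ u e * G.incMatrix ℝ v e)]
      apply Finset.sum_subset (Finset.subset_univ _)
      intro e _ he
      rw [G.incMatrix_of_notMem_incidenceSet, zero_mul]
      intro hmem
      exact he (SimpleGraph.mem_edgeFinset.2 hmem.1)
    have e3 : ∑ e : Sym2 V, G.incMatrix ℝ u e * G.incMatrix ℝ v e
        = (G.incMatrix ℝ * (G.incMatrix ℝ).transpose) u v := by
      simp [Matrix.mul_apply]
    rw [e1, e2, e3, h1]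
    rw [hL]
    by_cases huv : u = v
    · subst huv
      simp [hreg u, Matrix.one_apply]
      ring
    · simp [huv, Matrix.one_apply_ne huv, SimpleGraph.adjMatrix]
  -- B (Bᵀ x) = (2r - λ) x
  have hw : B.mulVec w = (2 * r - lam) • x := by
    rw [hwdef, Matrix.mulVec_mulVec, hBBT, Matrix.sub_mulVec, heig,
      Matrix.smul_mulVec, Matrix.one_mulVec, ← sub_smul]
  have hBw : ∀ v, ∑ e : G.edgeSet, B v e * w e = (2 * r - lam) * x v := by
    intro v
    have := congrFun hw v
    simpa [Matrix.mulVec, dotProduct] using this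
  -- scalar setup
  have hcne : (2 * r - lam : ℝ) ≠ 0 := sub_ne_zero.2 fun h => hlam h.symm
  have hq0 : (0:ℝ) < (q : ℝ) := by exact_mod_cast hq
  have hqne : (q : ℝ) ≠ 0 := ne_of_gt hq0
  -- 2r - λ ≥ 0
  have hxx : 0 < dotProduct x x := by
    rcases (dotProduct_self_eq_zero (v := x)).not.2 hx with h
    have hnn : 0 ≤ dotProduct x x := Finset.sum_nonneg fun i _ => mul_self_nonneg _
    exact lt_of_le_of_ne hnn (Ne.symm h)
  have hcnn : 0 ≤ 2 * (r : ℝ) - lam := by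
    have e1 : dotProduct x (B.mulVec w) = dotProduct w w := by
      rw [Matrix.dotProduct_mulVec, ← Matrix.mulVec_transpose, ← hwdef]
    have e2 : dotProduct x (B.mulVec w) = (2 * r - lam) * (dotProduct x x) := by
      rw [hw, dotProduct_smul, smul_eq_mul]
    have hww : 0 ≤ dotProduct w w := Finset.sum_nonneg fun i _ => mul_self_nonneg _
    nlinarith [e1.symm.trans e2]
  have hμ0 : 0 ≤ μ := by
    rw [hμ]
    have := sq_nonneg ((q : ℝ) * r + lam - 2)
    nlinarith
  have hs : Real.sqrt μ ^ 2 = μ := Real.sq_sqrt hμ0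
  have hε2 : ε ^ 2 = 1 := by rcases hε with h | h <;> simp [h]
  -- the two key scalar identities
  have hD : (2 * (q:ℝ) * (2 * r - lam)) ≠ 0 := mul_ne_zero (mul_ne_zero two_ne_zero hqne) hcne
  have hyD : y * (2 * q * (2 * r - lam)) = q * r + lam - 2 - ε * Real.sqrt μ := by
    rw [hy]; exact div_mul_cancel₀ _ hD
  have hA : (q : ℝ) * r + lam - q * y * (2 * r - lam) = f := by
    rw [hf]
    linear_combination (-1/2 : ℝ) * hyD
  have hes : (ε * Real.sqrt μ) ^ 2 = μ := by
    rw [mul_pow, hε2, one_mul, hs]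
  have hBid : 2 * y - 1 = f * y := by
    apply mul_right_cancel₀ hD
    rw [hf]
    linear_combination (2 - (1/2) * (q * r + lam + 2 + ε * Real.sqrt μ)) * hyD + (1/2 : ℝ) * hes
      + (1/2 : ℝ) * hμ
  -- the block computation
  rw [hM]
  have helim : (Sum.elim x (fun p : Fin q × G.edgeSet => y * w p.2)) ∘ Sum.inl = x := rfl
  rw [Matrix.fromBlocks_mulVec]
  funext z
  cases z with
  | inl v =>
    have hsum : ∑ p : Fin q × G.edgeSet, (-B v p.2) * (y * w p.2)
        = -((q : ℝ) * (y * ((2 * r - lam) * x v))) := by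
      rw [Fintype.sum_prod_type]
      have inner : ∑ e : G.edgeSet, (-B v e) * (y * w e)
          = -(y * ((2 * r - lam) * x v)) := by
        have : ∀ e : G.edgeSet, (-B v e) * (y * w e) = -y * (B v e * w e) := by
          intro e; ring
        simp_rw [this, ← Finset.mul_sum, hBw v]
        ring
      rw [Finset.sum_congr rfl fun (a : Fin q) _ => inner, Finset.sum_const,
        Finset.card_univ, Fintype.card_fin, nsmul_eq_mul]
      ring
    have lhs1 : ((((q * r : ℕ) : ℝ) • (1 : Matrix V V ℝ) + L).mulVec x) v
        = (q : ℝ) * r * x v + lam * x v := by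
      rw [Matrix.add_mulVec, Matrix.smul_mulVec, Matrix.one_mulVec, heig]
      simp only [Pi.add_apply, Pi.smul_apply, smul_eq_mul]
      push_cast
      ring
    simp only [Sum.elim_inl, Sum.elim_comp_inl, Pi.add_apply, Pi.smul_apply, smul_eq_mul]
    have lhs2 : (Matrix.of fun v (p : Fin q × G.edgeSet) => -B v p.2).mulVec
        ((Sum.elim x fun p : Fin q × G.edgeSet => y * w p.2) ∘ Sum.inr) v
        = -((q : ℝ) * (y * ((2 * r - lam) * x v))) := by
      rw [← hsum]
      simp [Matrix.mulVec, dotProduct]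
    rw [lhs1, lhs2]
    linear_combination x v * hA
  | inr p =>
    simp only [Sum.elim_inr, Sum.elim_comp_inl, Pi.add_apply, Pi.smul_apply, smul_eq_mul]
    have lhs1 : (Matrix.of fun (p : Fin q × G.edgeSet) v => -B v p.2).mulVec x p
        = -(w p.2) := by
      simp [Matrix.mulVec, dotProduct, hwdef, Finset.sum_neg_distrib, mul_comm]
    have lhs2 : (((2 : ℝ) • (1 : Matrix (Fin q × G.edgeSet) (Fin q × G.edgeSet) ℝ)).mulVec
        ((Sum.elim x fun p : Fin q × G.edgeSet => y * w p.2) ∘ Sum.inr)) p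
        = 2 * (y * w p.2) := by
      rw [Matrix.smul_mulVec, Matrix.one_mulVec]
      rfl
    rw [lhs1, lhs2]
    linear_combination (w p.2) * hBid
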